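/- Let D ⊆ ℂ be an open disk centered at a point x₀ ∈ ℝ, and let H : D → ℂ be holomorphic and injective with H(D ∩ ℝ) ⊆ ℝ. Then there exist constants C > 0 and D₀ > 0 and an open disk D' ⊆ D centered at x₀ such that C · |Im z| ≤ |Im H(z)| ≤ D₀ · |Im z| for all z ∈ D'. -/

import Mathlib

open Metric Complex Filter Asymptotics Topology Real

lemma conj_mem_ball' {x₀ r : ℝ} {z : ℂ} (hz : z ∈ ball (x₀:ℂ) r) :
    (starRingEnd ℂ) z ∈ ball (x₀:ℂ) r := by
  rwa [mem_ball, ← Complex.conj_ofReal x₀, Complex.dist_conj_conj]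

lemma hasDerivAt_conj_conj' {f : ℂ → ℂ} {d z : ℂ}
    (hf : HasDerivAt f d ((starRingEnd ℂ) z)) :
    HasDerivAt (fun w => (starRingEnd ℂ) (f ((starRingEnd ℂ) w))) ((starRingEnd ℂ) d) z := by
  rw [hasDerivAt_iff_isLittleO] at hf ⊢
  have tconj : Filter.Tendsto (starRingEnd ℂ) (𝓝 z) (𝓝 ((starRingEnd ℂ) z)) :=
    Complex.continuous_conj.tendsto z
  have h2 := hf.comp_tendsto tconj
  rw [← isLittleO_norm_norm] at h2 ⊢
  have e1 : ∀ y : ℂ, ‖(starRingEnd ℂ) (f ((starRingEnd ℂ) y)) - (starRingEnd ℂ) (f ((starRingEnd ℂ) z))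
      - (y - z) • (starRingEnd ℂ) d‖
      = ‖f ((starRingEnd ℂ) y) - f ((starRingEnd ℂ) z) - ((starRingEnd ℂ) y - (starRingEnd ℂ) z) • d‖ := by
    intro y
    rw [show (starRingEnd ℂ) (f ((starRingEnd ℂ) y)) - (starRingEnd ℂ) (f ((starRingEnd ℂ) z))
      - (y - z) • (starRingEnd ℂ) d
      = (starRingEnd ℂ) (f ((starRingEnd ℂ) y) - f ((starRingEnd ℂ) z) - ((starRingEnd ℂ) y - (starRingEnd ℂ) z) • d) by
        simp [smul_eq_mul, map_sub, map_mul]]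
    exact RCLike.norm_conj _
  have e2 : ∀ y : ℂ, ‖y - z‖ = ‖(starRingEnd ℂ) y - (starRingEnd ℂ) z‖ := by
    intro y
    rw [← map_sub, RCLike.norm_conj]
  simp only [e1, e2]
  exact h2

lemma aux_no_high_order (x₀ ρ : ℝ) (hρ : 0 < ρ) (H : ℂ → ℂ)
    (hcont : ContinuousOn H (ball (x₀:ℂ) ρ))
    (himne : ∀ z ∈ ball (x₀:ℂ) ρ, z.im ≠ 0 → (H z).im ≠ 0)
    (hrx₀ : (H (x₀:ℂ)).im = 0)
    (n : ℕ) (hn : 2 ≤ n) (h : ℂ → ℂ) (hhc : ContinuousAt h (x₀:ℂ))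
    (haim : (h (x₀:ℂ)).im = 0) (ha0 : h (x₀:ℂ) ≠ 0)
    (heqv : ∀ᶠ z in 𝓝 (x₀:ℂ), H z - H x₀ = (z - x₀) ^ n • h z) : False := by
  set a : ℂ := h (x₀:ℂ) with ha_def
  have hc0 : a.re ≠ 0 := by
    intro h0
    exact ha0 (Complex.ext h0 haim)
  have hcpos : 0 < |a.re| / 2 := by positivity
  have h1 : ∀ᶠ z in 𝓝 (x₀:ℂ), h z ∈ ball a (|a.re| / 2) :=
    hhc (Metric.ball_mem_nhds a hcpos)
  have h2 : ∀ᶠ z in 𝓝 (x₀:ℂ), z ∈ ball (x₀:ℂ) ρ :=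
    isOpen_ball.mem_nhds (mem_ball_self (by exact_mod_cast hρ))
  obtain ⟨δ, hδ, hδP⟩ := Metric.eventually_nhds_iff.mp ((heqv.and h1).and h2)
  set r : ℝ := δ / 2 with hr_def
  have hr : 0 < r := by positivity
  set z : ℝ → ℂ := fun θ => (x₀:ℂ) + (r:ℂ) * Complex.exp ((θ:ℝ) * Complex.I) with hz_def
  have hzd : ∀ θ : ℝ, dist (z θ) (x₀:ℂ) < δ := by
    intro θ
    have hd : dist (z θ) (x₀:ℂ) = r := by
      rw [hz_def]
      simp only [Complex.dist_eq, add_sub_cancel_left, norm_mul, Complex.norm_real, Real.norm_eq_abs,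
        Complex.norm_exp_ofReal_mul_I, mul_one]
      exact abs_of_pos hr
    rw [hd, hr_def]; linarith
  have hzP := fun θ : ℝ => hδP (hzd θ)
  set φ : ℝ → ℝ := fun θ => (H (z θ)).im with hφ_def
  have key : ∀ θ : ℝ, φ θ = r ^ n * (Complex.exp ((n * θ : ℝ) * Complex.I) * h (z θ)).im := by
    intro θ
    have h3 := (hzP θ).1.1
    have h4 : φ θ = (H (z θ) - H (x₀:ℂ)).im := by
      simp [hφ_def, Complex.sub_im, hrx₀]
    rw [h4, h3]
    have h5 : (z θ - (x₀:ℂ)) ^ n = ((r ^ n : ℝ) : ℂ) * Complex.exp ((n * θ : ℝ) * Complex.I) := by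
      simp only [hz_def, add_sub_cancel_left, mul_pow, ← Complex.exp_nat_mul]
      push_cast
      ring_nf
    rw [smul_eq_mul, h5, mul_assoc]
    simp only [Complex.mul_im, ← Complex.ofReal_pow, Complex.ofReal_re, Complex.ofReal_im]
    ring
  have hnR : (0:ℝ) < n := by positivity
  set θ₁ : ℝ := π / (2 * n) with hθ₁
  set θ₂ : ℝ := 3 * π / (2 * n) with hθ₂
  have hexp1 : Complex.exp ((n * θ₁ : ℝ) * Complex.I) = Complex.I := by
    have : (n * θ₁ : ℝ) = π / 2 := by
      field_simp [hθ₁]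
      rw [hθ₁]; field_simp
    rw [this]
    simp [Complex.exp_mul_I, ← Complex.ofReal_cos, ← Complex.ofReal_sin,
      Real.cos_pi_div_two, Real.sin_pi_div_two]
  have hexp2 : Complex.exp ((n * θ₂ : ℝ) * Complex.I) = -Complex.I := by
    have : (n * θ₂ : ℝ) = π + π / 2 := by
      field_simp [hθ₂]
      rw [hθ₂]; field_simp; norm_num
    rw [this]
    push_cast
    rw [add_mul, Complex.exp_add, Complex.exp_pi_mul_I]
    simp [Complex.exp_mul_I, ← Complex.ofReal_cos, ← Complex.ofReal_sin,
      Real.cos_pi_div_two, Real.sin_pi_div_two]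
  have hre : ∀ θ : ℝ, |(h (z θ)).re - a.re| < |a.re| / 2 := by
    intro θ
    have hb := (hzP θ).1.2
    rw [mem_ball, Complex.dist_eq] at hb
    calc |(h (z θ)).re - a.re| = |(h (z θ) - a).re| := by simp [Complex.sub_re]
      _ ≤ ‖h (z θ) - a‖ := Complex.abs_re_le_norm _
      _ < |a.re| / 2 := hb
  have hφ1 : φ θ₁ = r ^ n * (h (z θ₁)).re := by
    rw [key, hexp1, Complex.I_mul_im]
  have hφ2 : φ θ₂ = -(r ^ n * (h (z θ₂)).re) := by
    rw [key, hexp2]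
    simp [Complex.I_mul_im]
  have hrn : (0:ℝ) < r ^ n := by positivity
  have hθ12 : θ₁ ≤ θ₂ := by
    rw [hθ₁, hθ₂]
    have := Real.pi_pos
    gcongr
    linarith
  have hmaps : ∀ θ : ℝ, z θ ∈ ball (x₀:ℂ) ρ := fun θ => (hzP θ).2
  have hφcont : ContinuousOn φ (Set.uIcc θ₁ θ₂) := by
    apply Complex.continuous_im.comp_continuousOn
    apply hcont.comp
    · exact (Continuous.continuousOn (by continuity))
    · intro θ _
      exact hmaps θ
  have h0mem : (0:ℝ) ∈ Set.uIcc (φ θ₁) (φ θ₂) := by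
    rcases lt_or_gt_of_ne hc0 with hneg | hpos
    · have g1 : (h (z θ₁)).re < 0 := by
        have hx := hre θ₁; rw [abs_of_neg hneg] at hx
        obtain ⟨hl, hu⟩ := abs_lt.mp hx; linarith
      have g2 : (h (z θ₂)).re < 0 := by
        have hx := hre θ₂; rw [abs_of_neg hneg] at hx
        obtain ⟨hl, hu⟩ := abs_lt.mp hx; linarith
      rw [Set.mem_uIcc]
      left
      refine ⟨?_, ?_⟩
      · rw [hφ1]
        have := mul_neg_of_pos_of_neg hrn g1; linarith
      · rw [hφ2]
        have := mul_neg_of_pos_of_neg hrn g2; linarith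
    · have g1 : 0 < (h (z θ₁)).re := by
        have hx := hre θ₁; rw [abs_of_pos hpos] at hx
        obtain ⟨hl, hu⟩ := abs_lt.mp hx; linarith
      have g2 : 0 < (h (z θ₂)).re := by
        have hx := hre θ₂; rw [abs_of_pos hpos] at hx
        obtain ⟨hl, hu⟩ := abs_lt.mp hx; linarith
      rw [Set.mem_uIcc]
      right
      refine ⟨?_, ?_⟩
      · rw [hφ2]
        have := mul_pos hrn g2; linarith
      · rw [hφ1]
        have := mul_pos hrn g1; linarith
  obtain ⟨θ, hθmem, hθ0⟩ := intermediate_value_uIcc hφcont h0mem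
  rw [Set.uIcc_of_le hθ12] at hθmem
  have hθpos : 0 < θ := by
    have : 0 < θ₁ := by
      rw [hθ₁]; positivity
    linarith [hθmem.1]
  have hθlt : θ < π := by
    have h6 : θ₂ ≤ 3 * π / 4 := by
      rw [hθ₂]
      have := Real.pi_pos
      rw [div_le_div_iff₀ (by positivity) (by norm_num)]
      have h7 : (2:ℝ) ≤ n := by exact_mod_cast hn
      nlinarith
    have := Real.pi_pos
    linarith [hθmem.2]
  have him : (z θ).im = r * Real.sin θ := by
    simp [hz_def, Complex.exp_ofReal_mul_I_im]
  have himne' : (z θ).im ≠ 0 := by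
    rw [him]
    have := Real.sin_pos_of_pos_of_lt_pi hθpos hθlt
    positivity
  exact himne (z θ) (hmaps θ) himne' hθ0

/-- Let `D` be an open disk centered at a real point `x₀`, and let `H` be holomorphic
and injective on `D` with `H(D ∩ ℝ) ⊆ ℝ`.  Then there are constants `C, D₀ > 0` and a
smaller disk `D'` centered at `x₀` on which `C|Im z| ≤ |Im H(z)| ≤ D₀|Im z|`. -/
theorem stmt12 (x₀ : ℝ) (ρ : ℝ) (hρ : 0 < ρ) (H : ℂ → ℂ)
    (hH : DifferentiableOn ℂ H (ball (x₀ : ℂ) ρ))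
    (hinj : Set.InjOn H (ball (x₀ : ℂ) ρ))
    (hreal : ∀ z ∈ ball (x₀ : ℂ) ρ, z.im = 0 → (H z).im = 0) :
    ∃ C > (0 : ℝ), ∃ D₀ > (0 : ℝ), ∃ ρ' > (0 : ℝ),
      ball (x₀ : ℂ) ρ' ⊆ ball (x₀ : ℂ) ρ ∧
      ∀ z ∈ ball (x₀ : ℂ) ρ',
        C * |z.im| ≤ |(H z).im| ∧ |(H z).im| ≤ D₀ * |z.im| := by
  have hx₀ : (x₀:ℂ) ∈ ball (x₀:ℂ) ρ := mem_ball_self hρ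
  have hHa : AnalyticOnNhd ℂ H (ball (x₀:ℂ) ρ) := hH.analyticOnNhd isOpen_ball
  set g : ℂ → ℂ := fun w => (starRingEnd ℂ) (H ((starRingEnd ℂ) w)) with hg_def
  have hg : DifferentiableOn ℂ g (ball (x₀:ℂ) ρ) := by
    intro w hw
    have hw' := conj_mem_ball' hw
    exact (hasDerivAt_conj_conj'
      (hH.differentiableAt (isOpen_ball.mem_nhds hw')).hasDerivAt).differentiableAt.differentiableWithinAt
  have hga : AnalyticOnNhd ℂ g (ball (x₀:ℂ) ρ) := hg.analyticOnNhd isOpen_ball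
  have hfreq : ∃ᶠ z in 𝓝[≠] (x₀:ℂ), H z = g z := by
    rw [Filter.frequently_iff]
    intro U hU
    rw [mem_nhdsWithin] at hU
    obtain ⟨t, ht, hxt, htU⟩ := hU
    obtain ⟨ε, hε, hballt⟩ := Metric.isOpen_iff.mp ht _ hxt
    set s : ℝ := min ε ρ / 2 with hs_def
    have hs : 0 < s := by positivity
    have hsε : s < ε := by
      have h1 : min ε ρ ≤ ε := min_le_left _ _
      have h2 : 0 < min ε ρ := lt_min hε hρ
      rw [hs_def]; linarith
    have hsρ : s < ρ := by
      have h1 : min ε ρ ≤ ρ := min_le_right _ _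
      have h2 : 0 < min ε ρ := lt_min hε hρ
      rw [hs_def]; linarith
    set w : ℂ := ((x₀ + s : ℝ) : ℂ) with hw_def
    have hwball : ∀ {r' : ℝ}, s < r' → w ∈ ball (x₀:ℂ) r' := by
      intro r' hr'
      rw [mem_ball, hw_def, Complex.isometry_ofReal.dist_eq, Real.dist_eq]
      rw [show x₀ + s - x₀ = s by ring, abs_of_pos hs]
      exact hr'
    have hwim : w.im = 0 := by simp [hw_def]
    have hwρ : w ∈ ball (x₀:ℂ) ρ := hwball hsρ
    have hHw : (H w).im = 0 := hreal w hwρ hwim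
    refine ⟨w, htU ⟨hballt (hwball hsε), ?_⟩, ?_⟩
    · simp only [Set.mem_compl_iff, Set.mem_singleton_iff, hw_def]
      intro hcon
      rw [Complex.ofReal_inj] at hcon
      linarith
    · have hcw : (starRingEnd ℂ) w = w := Complex.conj_eq_iff_im.mpr hwim
      simp only [hg_def, hcw]
      exact (Complex.conj_eq_iff_im.mpr hHw).symm
  have hEq : Set.EqOn H g (ball (x₀:ℂ) ρ) :=
    hHa.eqOn_of_preconnected_of_frequently_eq hga (convex_ball _ _).isPreconnected hx₀ hfreq
  have hconj : ∀ z ∈ ball (x₀:ℂ) ρ, H ((starRingEnd ℂ) z) = (starRingEnd ℂ) (H z) := by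
    intro z hz
    have h1 := hEq (conj_mem_ball' hz)
    simp only [hg_def, Complex.conj_conj] at h1
    exact h1
  have himne : ∀ z ∈ ball (x₀:ℂ) ρ, z.im ≠ 0 → (H z).im ≠ 0 := by
    intro z hz h0 hHim
    apply h0
    rw [← Complex.conj_eq_iff_im]
    apply hinj (conj_mem_ball' hz) hz
    rw [hconj z hz, Complex.conj_eq_iff_im]
    exact hHim
  have hrx₀ : (H (x₀:ℂ)).im = 0 := hreal _ hx₀ (by simp)
  have hf0a : AnalyticAt ℂ (fun z => H z - H (x₀:ℂ)) (x₀:ℂ) := (hHa _ hx₀).sub analyticAt_const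
  have hne : ¬ ∀ᶠ z in 𝓝 (x₀:ℂ), (fun z => H z - H (x₀:ℂ)) z = 0 := by
    intro hev
    have hev' : ∀ᶠ z in 𝓝[≠] (x₀:ℂ),
        (H z - H (x₀:ℂ) = 0 ∧ z ∈ ball (x₀:ℂ) ρ) ∧ z ≠ (x₀:ℂ) := by
      refine (((hev.and (isOpen_ball.mem_nhds hx₀)).filter_mono nhdsWithin_le_nhds).and ?_)
      exact eventually_mem_nhdsWithin
    obtain ⟨z, ⟨⟨hz0, hzb⟩, hzne⟩⟩ := hev'.exists
    exact hzne (hinj hzb hx₀ (by rwa [← sub_eq_zero]))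
  obtain ⟨n, h, hha, ha0, heqv⟩ := hf0a.exists_eventuallyEq_pow_smul_nonzero_iff.mpr hne
  set a : ℂ := h (x₀:ℂ) with ha_def
  have haim : a.im = 0 := by
    have hball_ev : ∀ᶠ z in 𝓝 (x₀:ℂ), z ∈ ball (x₀:ℂ) ρ := isOpen_ball.mem_nhds hx₀
    have hcomb := heqv.and hball_ev
    have hmap : Filter.Tendsto (fun t : ℝ => ((x₀ + t : ℝ) : ℂ)) (𝓝 0) (𝓝 (x₀:ℂ)) := by
      have hcm : Continuous (fun t : ℝ => ((x₀ + t : ℝ) : ℂ)) := by continuity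
      have h0 := hcm.tendsto 0
      simpa using h0
    have hev2 : ∀ᶠ t in 𝓝 (0:ℝ),
        (H ((x₀ + t : ℝ) : ℂ) - H (x₀:ℂ) = (((x₀ + t : ℝ) : ℂ) - (x₀:ℂ)) ^ n • h ((x₀ + t : ℝ) : ℂ))
        ∧ ((x₀ + t : ℝ) : ℂ) ∈ ball (x₀:ℂ) ρ := hmap.eventually hcomb
    have hzero : ∀ᶠ t in 𝓝[≠] (0:ℝ), (h ((x₀ + t : ℝ) : ℂ)).im = 0 := by
      filter_upwards [hev2.filter_mono nhdsWithin_le_nhds, self_mem_nhdsWithin] with t ht htne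
      obtain ⟨hteq, htball⟩ := ht
      have htne' : (t : ℝ) ≠ 0 := htne
      have him1 : (H ((x₀ + t : ℝ) : ℂ)).im = 0 := hreal _ htball (by simp)
      have hcast : (((x₀ + t : ℝ) : ℂ) - (x₀:ℂ)) = ((t : ℝ) : ℂ) := by push_cast; ring
      rw [hcast, smul_eq_mul] at hteq
      have h2 : ((t:ℝ):ℂ) ^ n = ((t ^ n : ℝ) : ℂ) := by push_cast; ring
      rw [h2] at hteq
      have h3 : (H ((x₀ + t : ℝ) : ℂ) - H (x₀:ℂ)).im = t ^ n * (h ((x₀ + t : ℝ) : ℂ)).im := by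
        rw [hteq]
        simp only [Complex.mul_im, Complex.ofReal_re, Complex.ofReal_im, zero_mul, add_zero]
      have h4 : t ^ n * (h ((x₀ + t : ℝ) : ℂ)).im = 0 := by
        rw [← h3, Complex.sub_im, him1, hrx₀, sub_zero]
      exact (mul_eq_zero.mp h4).resolve_left (pow_ne_zero _ htne')
    have h4 : Filter.Tendsto (fun t : ℝ => h ((x₀ + t : ℝ) : ℂ)) (𝓝 0) (𝓝 a) :=
      hha.continuousAt.tendsto.comp hmap
    have hcont2 : Filter.Tendsto (fun t : ℝ => (h ((x₀ + t : ℝ) : ℂ)).im) (𝓝 0) (𝓝 a.im) :=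
      (Complex.continuous_im.tendsto a).comp h4
    have hcont3 : Filter.Tendsto (fun t : ℝ => (h ((x₀ + t : ℝ) : ℂ)).im) (𝓝[≠] (0:ℝ)) (𝓝 a.im) :=
      hcont2.mono_left nhdsWithin_le_nhds
    have hzero' : Filter.Tendsto (fun t : ℝ => (h ((x₀ + t : ℝ) : ℂ)).im) (𝓝[≠] (0:ℝ)) (𝓝 0) :=
      Filter.Tendsto.congr' (hzero.mono fun t ht => ht.symm) tendsto_const_nhds
    exact tendsto_nhds_unique hcont3 hzero'
  have hn0 : n ≠ 0 := by
    intro hn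
    subst hn
    have h0 : (0:ℂ) = h (x₀:ℂ) := by simpa using heqv.self_of_nhds
    exact ha0 h0.symm
  have hn1 : n = 1 := by
    by_contra hne1
    have hn2 : 2 ≤ n := by omega
    exact aux_no_high_order x₀ ρ hρ H hH.continuousOn himne hrx₀ n hn2 h hha.continuousAt haim
      ha0 heqv
  subst hn1
  have hderiv : HasDerivAt H a (x₀:ℂ) := by
    have h1 : HasDerivAt (fun z => (z - (x₀:ℂ)) * h z + H (x₀:ℂ))
        ((1:ℂ) * h (x₀:ℂ) + ((x₀:ℂ) - (x₀:ℂ)) * deriv h (x₀:ℂ)) (x₀:ℂ) :=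
      (((hasDerivAt_id _).sub_const _).mul hha.differentiableAt.hasDerivAt).add_const _
    have h2 : (1:ℂ) * h (x₀:ℂ) + ((x₀:ℂ) - (x₀:ℂ)) * deriv h (x₀:ℂ) = a := by
      rw [ha_def]; ring
    rw [h2] at h1
    apply h1.congr_of_eventuallyEq
    filter_upwards [heqv] with z hz
    rw [pow_one, smul_eq_mul] at hz
    linear_combination hz
  have hstrict : HasStrictDerivAt H a (x₀:ℂ) := by
    obtain ⟨p, hp⟩ := hHa _ hx₀
    have hs := hp.hasStrictDerivAt
    rwa [hs.hasDerivAt.unique hderiv] at hs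
  set c : ℝ := a.re with hc_def
  have hc0 : c ≠ 0 := by
    intro h0
    exact ha0 (Complex.ext h0 haim)
  have hcpos : 0 < |c| := abs_pos.mpr hc0
  have hlo := (hasStrictDerivAt_iff_hasStrictFDerivAt.mp hstrict).isLittleO
  rw [isLittleO_iff] at hlo
  have hev := hlo (show (0:ℝ) < |c|/2 by positivity)
  obtain ⟨ε, hε, hball2⟩ := Metric.eventually_nhds_iff.mp hev
  refine ⟨|c|/2, by positivity, 2*|c|, by positivity, min ε ρ, lt_min hε hρ,
    ball_subset_ball (min_le_right _ _), ?_⟩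
  intro z hz
  have hzρ : z ∈ ball (x₀:ℂ) ρ := ball_subset_ball (min_le_right ε ρ) hz
  have hzconj : H ((starRingEnd ℂ) z) = (starRingEnd ℂ) (H z) := hconj z hzρ
  have hdist : dist (z, (starRingEnd ℂ) z) ((x₀:ℂ), (x₀:ℂ)) < ε := by
    rw [Prod.dist_eq]
    have h1 : dist z (x₀:ℂ) < ε := lt_of_lt_of_le (mem_ball.mp hz) (min_le_left _ _)
    have h2 : dist ((starRingEnd ℂ) z) (x₀:ℂ) < ε := by
      rw [← Complex.conj_ofReal x₀, Complex.dist_conj_conj]; exact h1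
    exact max_lt h1 h2
  have hkey := hball2 hdist
  simp only [ContinuousLinearMap.smulRight_apply, ContinuousLinearMap.one_apply,
    smul_eq_mul] at hkey
  rw [hzconj] at hkey
  set E : ℂ := H z - (starRingEnd ℂ) (H z) - (z - (starRingEnd ℂ) z) * a with hE_def
  have hEim : E.im = 2*(H z).im - 2*z.im*c := by
    rw [hE_def, Complex.sub_conj]
    simp only [one_mul, Complex.sub_im, Complex.conj_im, Complex.mul_im, Complex.mul_re,
      Complex.ofReal_re, Complex.ofReal_im, Complex.I_re, Complex.I_im, haim, hc_def]
    ring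
  have hnorm : ‖z - (starRingEnd ℂ) z‖ = 2 * |z.im| := by
    rw [Complex.sub_conj]
    simp [abs_mul]
  have habs : |E.im| ≤ ‖E‖ := by
    exact Complex.abs_im_le_norm E
  have hmain : |(H z).im - z.im * c| ≤ |c|/2 * |z.im| := by
    have e1 : |2*((H z).im - z.im*c)| ≤ |c|/2*(2*|z.im|) := by
      calc |2*((H z).im - z.im*c)| = |E.im| := by rw [hEim]; ring_nf
        _ ≤ ‖E‖ := habs
        _ ≤ |c|/2 * ‖z - (starRingEnd ℂ) z‖ := hkey
        _ = |c|/2*(2*|z.im|) := by rw [hnorm]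
    rw [abs_mul] at e1
    rw [show |(2:ℝ)| = 2 by norm_num] at e1
    linarith
  have hzc : |z.im * c| = |c| * |z.im| := by
    rw [abs_mul]; ring
  constructor
  · have h5 : |z.im * c| - |(H z).im| ≤ |c|/2 * |z.im| := by
      calc |z.im * c| - |(H z).im| ≤ |z.im * c - (H z).im| := by
            exact abs_sub_abs_le_abs_sub _ _
        _ = |(H z).im - z.im * c| := by rw [abs_sub_comm]
        _ ≤ |c|/2 * |z.im| := hmain
    rw [hzc] at h5
    linarith
  · have h5 : |(H z).im| - |z.im * c| ≤ |c|/2 * |z.im| := by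
      calc |(H z).im| - |z.im * c| ≤ |(H z).im - z.im * c| := abs_sub_abs_le_abs_sub _ _
        _ ≤ |c|/2 * |z.im| := hmain
    rw [hzc] at h5
    nlinarith [abs_nonneg z.im]
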